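/- Let S consist of 2n points given as n pairs {p_i, q_i} in a metric space, let T be a minimum spanning tree of S, let h be a maximum-weight edge of T, and let T_1, T_2 be the vertex sets of the two components of T after removing h. If both points of some pair lie in T_1 and both points of some pair lie in T_2, then mstCost(S) ≤ (3/2) · min over all feasible colorings S = R ∪ B of (mstCost(R) + mstCost(B)). -/

import Mathlib

variable {α : Type*} [MetricSpace α] [DecidableEq α]

/-- Two points are connected via the edge set `E` (edges usable in both directions). -/
def EdgeConn (E : Finset (α × α)) (x y : α) : Prop :=
  Relation.ReflTransGen (fun a b => (a, b) ∈ E ∨ (b, a) ∈ E) x y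

/-- `E` is (the edge set of) a spanning tree of the complete graph on the finite
point set `X`. -/
def IsSpanningTreeOn (X : Finset α) (E : Finset (α × α)) : Prop :=
  (∀ e ∈ E, e.1 ∈ X ∧ e.2 ∈ X) ∧ E.card + 1 = X.card ∧
    ∀ x ∈ X, ∀ y ∈ X, EdgeConn E x y

/-- The minimum total edge length of a spanning tree on `X`. -/
noncomputable def mstCost (X : Finset α) : ℝ :=
  sInf {c | ∃ E : Finset (α × α), IsSpanningTreeOn X E ∧ c = ∑ e ∈ E, dist e.1 e.2}

private lemma edgeConn_mono {E E' : Finset (α × α)} (hEE : E ⊆ E') {x y : α}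
    (hxy : EdgeConn E x y) : EdgeConn E' x y :=
  Relation.ReflTransGen.mono (r := fun a b => (a, b) ∈ E ∨ (b, a) ∈ E) (fun _ _ hab => hab.imp (fun h' => hEE h') (fun h' => hEE h')) _ _ hxy

private lemma edgeConn_symm {E : Finset (α × α)} {x y : α} (hxy : EdgeConn E x y) :
    EdgeConn E y x :=
  (@Relation.ReflTransGen.symmetric _ (fun a b => (a, b) ∈ E ∨ (b, a) ∈ E) ⟨fun _ _ hab => hab.symm⟩).symm _ _ hxy

private lemma exists_spanningTree (X : Finset α) (hX : X.Nonempty) :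
    ∃ E : Finset (α × α), IsSpanningTreeOn X E := by
  obtain ⟨x₀, hx₀⟩ := hX
  refine ⟨(X.erase x₀).image (fun y => (x₀, y)), ?_, ?_, ?_⟩
  · intro e he
    simp only [Finset.mem_image] at he
    obtain ⟨y, hy, rfl⟩ := he
    exact ⟨hx₀, Finset.mem_of_mem_erase hy⟩
  · rw [Finset.card_image_of_injective _ (fun a b hab => by simpa using hab),
      Finset.card_erase_of_mem hx₀]
    have : 1 ≤ X.card := Finset.card_pos.mpr ⟨x₀, hx₀⟩
    omega
  · have key : ∀ z ∈ X, EdgeConn ((X.erase x₀).image (fun y => (x₀, y))) x₀ z := by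
      intro z hz
      rcases eq_or_ne z x₀ with rfl | hne
      · exact .refl
      · exact .single (Or.inl (Finset.mem_image_of_mem _ (Finset.mem_erase.mpr ⟨hne, hz⟩)))
    intro x hx y hy
    exact (edgeConn_symm (key x hx)).trans (key y hy)

private lemma exists_crossing {r : α → α → Prop} {P : α → Prop} {x y : α}
    (hxy : Relation.ReflTransGen r x y) (hx : P x) :
    ¬ P y → ∃ a b, r a b ∧ P a ∧ ¬ P b := by
  induction hxy with
  | refl => exact fun hy => absurd hx hy
  | @tail b c hab hbc ih =>
    intro hc
    by_cases hb : P b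
    · exact ⟨b, c, hbc, hb, hc⟩
    · exact ih hb

private lemma mstCost_bddBelow (X : Finset α) :
    BddBelow {c | ∃ E : Finset (α × α), IsSpanningTreeOn X E ∧ c = ∑ e ∈ E, dist e.1 e.2} :=
  ⟨0, by
    rintro c ⟨E, _, rfl⟩
    exact Finset.sum_nonneg fun e _ => dist_nonneg⟩

private lemma per_sigma
    (n : ℕ) (hn : 1 ≤ n)
    (pts : Fin n × Bool → α) (hinj : Function.Injective pts)
    (S : Finset α) (hS : S = Finset.image pts Finset.univ)
    (T : Finset (α × α)) (hT : IsSpanningTreeOn S T)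
    (hTmin : (∑ e ∈ T, dist e.1 e.2) = mstCost S)
    (h : α × α) (hh : h ∈ T) (hmax : ∀ e ∈ T, dist e.1 e.2 ≤ dist h.1 h.2)
    (T₁ T₂ : Finset α) (hpart : T₁ ∪ T₂ = S) (hdisj : Disjoint T₁ T₂)
    (hcomp : ∀ x ∈ S, ∀ y ∈ S,
      EdgeConn (T.erase h) x y ↔ ((x ∈ T₁ ∧ y ∈ T₁) ∨ (x ∈ T₂ ∧ y ∈ T₂)))
    (hpairT₁ : ∃ i : Fin n, pts (i, false) ∈ T₁ ∧ pts (i, true) ∈ T₁)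
    (hpairT₂ : ∃ i : Fin n, pts (i, false) ∈ T₂ ∧ pts (i, true) ∈ T₂)
    (σ : Fin n → Bool) :
    mstCost S ≤ (3 / 2) *
      (mstCost (Finset.image (fun i => pts (i, σ i)) Finset.univ) +
       mstCost (Finset.image (fun i => pts (i, !(σ i))) Finset.univ)) := by
  set R := Finset.image (fun i => pts (i, σ i)) Finset.univ with hRdef
  set B := Finset.image (fun i => pts (i, !(σ i))) Finset.univ with hBdef
  have hmemS : ∀ i b, pts (i, b) ∈ S := by
    intro i b; rw [hS]; exact Finset.mem_image_of_mem _ (Finset.mem_univ _)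
  have hmemR : ∀ i, pts (i, σ i) ∈ R := fun i =>
    Finset.mem_image_of_mem _ (Finset.mem_univ i)
  have hmemB : ∀ i, pts (i, !(σ i)) ∈ B := fun i =>
    Finset.mem_image_of_mem _ (Finset.mem_univ i)
  have hRS : R ⊆ S := by
    intro x hx
    rw [hRdef] at hx
    obtain ⟨i, _, rfl⟩ := Finset.mem_image.mp hx
    exact hmemS i _
  have hBS : B ⊆ S := by
    intro x hx
    rw [hBdef] at hx
    obtain ⟨i, _, rfl⟩ := Finset.mem_image.mp hx
    exact hmemS i _
  have hRBS : R ∪ B = S := by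
    apply Finset.Subset.antisymm (Finset.union_subset hRS hBS)
    intro x hx
    rw [hS] at hx
    obtain ⟨⟨i, b⟩, _, rfl⟩ := Finset.mem_image.mp hx
    rcases Bool.eq_or_eq_not b (σ i) with rfl | rfl
    · exact Finset.mem_union_left _ (hmemR i)
    · exact Finset.mem_union_right _ (hmemB i)
  have hdRB : Disjoint R B := by
    rw [Finset.disjoint_left]
    intro x hxR hxB
    rw [hRdef] at hxR; rw [hBdef] at hxB
    obtain ⟨i, _, rfl⟩ := Finset.mem_image.mp hxR
    obtain ⟨j, _, hji⟩ := Finset.mem_image.mp hxB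
    have heq := hinj hji
    have h1 : j = i := congrArg Prod.fst heq
    have h2 : (!(σ j)) = σ i := congrArg Prod.snd heq
    rw [h1] at h2
    exact Bool.not_ne_self (σ i) h2
  have hS12 : ∀ x ∈ S, x ∈ T₁ ∨ x ∈ T₂ := by
    intro x hx
    rw [← hpart] at hx
    exact Finset.mem_union.mp hx
  have hT1S : T₁ ⊆ S := hpart ▸ Finset.subset_union_left
  have hT2S : T₂ ⊆ S := hpart ▸ Finset.subset_union_right
  -- the cut lemma
  have hcut : ∀ u ∈ T₁, ∀ v ∈ T₂, dist h.1 h.2 ≤ dist u v := by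
    intro u hu v hv
    have huS : u ∈ S := hT1S hu
    have hvS : v ∈ S := hT2S hv
    have hnm : (u, v) ∉ T.erase h := by
      intro hm
      have hconn : EdgeConn (T.erase h) u v := .single (Or.inl hm)
      rcases (hcomp u huS v hvS).mp hconn with ⟨_, h2⟩ | ⟨h1, _⟩
      · exact Finset.disjoint_left.mp hdisj h2 hv
      · exact Finset.disjoint_left.mp hdisj hu h1
    have hT'span : IsSpanningTreeOn S (insert (u, v) (T.erase h)) := by
      refine ⟨?_, ?_, ?_⟩
      · intro e he
        rcases Finset.mem_insert.mp he with rfl | he'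
        · exact ⟨huS, hvS⟩
        · exact hT.1 e (Finset.mem_of_mem_erase he')
      · rw [Finset.card_insert_of_notMem hnm, Finset.card_erase_of_mem hh]
        have h1 : 1 ≤ T.card := Finset.card_pos.mpr ⟨h, hh⟩
        have h2 := hT.2.1
        omega
      · intro x hx y hy
        have hsub : T.erase h ⊆ insert (u, v) (T.erase h) := Finset.subset_insert _ _
        have conn1 : ∀ a ∈ T₁, EdgeConn (insert (u, v) (T.erase h)) a u := fun a ha =>
          edgeConn_mono hsub ((hcomp a (hT1S ha) u huS).mpr (Or.inl ⟨ha, hu⟩))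
        have conn2 : ∀ a ∈ T₂, EdgeConn (insert (u, v) (T.erase h)) a v := fun a ha =>
          edgeConn_mono hsub ((hcomp a (hT2S ha) v hvS).mpr (Or.inr ⟨ha, hv⟩))
        have huv : EdgeConn (insert (u, v) (T.erase h)) u v :=
          .single (Or.inl (Finset.mem_insert_self _ _))
        rcases hS12 x hx with hx1 | hx2 <;> rcases hS12 y hy with hy1 | hy2
        · exact (conn1 x hx1).trans (edgeConn_symm (conn1 y hy1))
        · exact (conn1 x hx1).trans (huv.trans (edgeConn_symm (conn2 y hy2)))
        · exact (conn2 x hx2).trans ((edgeConn_symm huv).trans (edgeConn_symm (conn1 y hy1)))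
        · exact (conn2 x hx2).trans (edgeConn_symm (conn2 y hy2))
    have hle : mstCost S ≤ ∑ e ∈ insert (u, v) (T.erase h), dist e.1 e.2 :=
      csInf_le (mstCost_bddBelow S) ⟨_, hT'span, rfl⟩
    rw [← hTmin, Finset.sum_insert hnm] at hle
    have hsplit : dist h.1 h.2 + ∑ e ∈ T.erase h, dist e.1 e.2 = ∑ e ∈ T, dist e.1 e.2 :=
      Finset.add_sum_erase T (fun e : α × α => dist e.1 e.2) hh
    linarith
  -- lower bound for the cost of any spanning tree of a set meeting both sides
  have lower : ∀ (X : Finset α) (EX : Finset (α × α)), IsSpanningTreeOn X EX → X ⊆ S →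
      (∃ a ∈ X, a ∈ T₁) → (∃ b ∈ X, b ∈ T₂) →
      dist h.1 h.2 ≤ ∑ e ∈ EX, dist e.1 e.2 := by
    rintro X EX hEX hXS ⟨a, haX, ha1⟩ ⟨b, hbX, hb2⟩
    have hconn := hEX.2.2 a haX b hbX
    have hb1 : ¬ (b ∈ T₁) := fun hb => Finset.disjoint_left.mp hdisj hb hb2
    obtain ⟨c, d, hcd, hc1, hd1⟩ := exists_crossing hconn ha1 hb1
    have hdX : d ∈ X := by
      rcases hcd with h' | h'
      · exact (hEX.1 _ h').2
      · exact (hEX.1 _ h').1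
    have hd2 : d ∈ T₂ := by
      rcases hS12 d (hXS hdX) with h' | h'
      · exact absurd h' hd1
      · exact h'
    have h1 : dist h.1 h.2 ≤ dist c d := hcut c hc1 d hd2
    rcases hcd with h' | h'
    · exact h1.trans (Finset.single_le_sum (f := fun e : α × α => dist e.1 e.2)
        (fun e _ => dist_nonneg) h')
    · refine h1.trans ?_
      rw [dist_comm]
      exact Finset.single_le_sum (f := fun e : α × α => dist e.1 e.2)
        (fun e _ => dist_nonneg) h'
  obtain ⟨i₁, hi₁f, hi₁t⟩ := hpairT₁
  obtain ⟨i₂, hi₂f, hi₂t⟩ := hpairT₂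
  have hp1 : ∀ b, pts (i₁, b) ∈ T₁ := by intro b; cases b <;> assumption
  have hp2 : ∀ b, pts (i₂, b) ∈ T₂ := by intro b; cases b <;> assumption
  set setR : Set ℝ :=
    {c | ∃ E : Finset (α × α), IsSpanningTreeOn R E ∧ c = ∑ e ∈ E, dist e.1 e.2} with hsetR
  set setB : Set ℝ :=
    {c | ∃ E : Finset (α × α), IsSpanningTreeOn B E ∧ c = ∑ e ∈ E, dist e.1 e.2} with hsetB
  have hmRR : mstCost R = sInf setR := rfl
  have hmBB : mstCost B = sInf setB := rfl
  have neR : setR.Nonempty := by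
    obtain ⟨E, hE⟩ := exists_spanningTree R ⟨_, hmemR i₁⟩
    exact ⟨_, E, hE, rfl⟩
  have neB : setB.Nonempty := by
    obtain ⟨E, hE⟩ := exists_spanningTree B ⟨_, hmemB i₁⟩
    exact ⟨_, E, hE, rfl⟩
  have hwR : dist h.1 h.2 ≤ mstCost R := by
    rw [hmRR]
    refine le_csInf neR ?_
    rintro c ⟨E, hE, rfl⟩
    exact lower R E hE hRS ⟨_, hmemR i₁, hp1 _⟩ ⟨_, hmemR i₂, hp2 _⟩
  have hwB : dist h.1 h.2 ≤ mstCost B := by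
    rw [hmBB]
    refine le_csInf neB ?_
    rintro c ⟨E, hE, rfl⟩
    exact lower B E hE hBS ⟨_, hmemB i₁, hp1 _⟩ ⟨_, hmemB i₂, hp2 _⟩
  -- a bichromatic edge of T of weight ≤ w(h)
  have hqR : pts (i₁, !(σ i₁)) ∉ R :=
    fun hq => Finset.disjoint_left.mp hdRB hq (hmemB i₁)
  have hconnT := hT.2.2 _ (hmemS i₁ (σ i₁)) _ (hmemS i₁ (!(σ i₁)))
  obtain ⟨u, v, huv, huR, hvR⟩ := exists_crossing (P := fun x => x ∈ R) hconnT (hmemR i₁) hqR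
  have huS : u ∈ S := by
    rcases huv with h' | h'
    · exact (hT.1 _ h').1
    · exact (hT.1 _ h').2
  have hvS : v ∈ S := by
    rcases huv with h' | h'
    · exact (hT.1 _ h').2
    · exact (hT.1 _ h').1
  have hvB : v ∈ B := by
    have : v ∈ R ∪ B := hRBS.symm ▸ hvS
    rcases Finset.mem_union.mp this with h' | h'
    · exact absurd h' hvR
    · exact h'
  have hduv : dist u v ≤ dist h.1 h.2 := by
    rcases huv with h' | h'
    · exact hmax _ h'
    · rw [dist_comm]; exact hmax _ h'
  -- union of spanning trees plus the bichromatic edge spans S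
  have key : ∀ cR ∈ setR, ∀ cB ∈ setB, mstCost S ≤ cR + cB + dist h.1 h.2 := by
    rintro cR ⟨ER, hER, rfl⟩ cB ⟨EB, hEB, rfl⟩
    have hdE : Disjoint ER EB := by
      rw [Finset.disjoint_left]
      intro e he1 he2
      exact Finset.disjoint_left.mp hdRB (hER.1 e he1).1 (hEB.1 e he2).1
    have hnm : (u, v) ∉ ER ∪ EB := by
      intro hm
      rcases Finset.mem_union.mp hm with h' | h'
      · exact Finset.disjoint_left.mp hdRB (hER.1 _ h').2 hvB
      · exact Finset.disjoint_left.mp hdRB huR (hEB.1 _ h').1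
    have hU : IsSpanningTreeOn S (insert (u, v) (ER ∪ EB)) := by
      refine ⟨?_, ?_, ?_⟩
      · intro e he
        rcases Finset.mem_insert.mp he with rfl | he'
        · exact ⟨huS, hvS⟩
        · rcases Finset.mem_union.mp he' with h' | h'
          · exact ⟨hRS (hER.1 e h').1, hRS (hER.1 e h').2⟩
          · exact ⟨hBS (hEB.1 e h').1, hBS (hEB.1 e h').2⟩
      · rw [Finset.card_insert_of_notMem hnm, Finset.card_union_of_disjoint hdE]
        have h1 := hER.2.1
        have h2 := hEB.2.1
        have h3 : S.card = R.card + B.card := by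
          rw [← hRBS, Finset.card_union_of_disjoint hdRB]
        omega
      · intro x hx y hy
        have hsub1 : ER ⊆ insert (u, v) (ER ∪ EB) :=
          (Finset.subset_union_left).trans (Finset.subset_insert _ _)
        have hsub2 : EB ⊆ insert (u, v) (ER ∪ EB) :=
          (Finset.subset_union_right).trans (Finset.subset_insert _ _)
        have connR : ∀ a ∈ R, EdgeConn (insert (u, v) (ER ∪ EB)) a u := fun a ha =>
          edgeConn_mono hsub1 (hER.2.2 a ha u huR)
        have connB : ∀ a ∈ B, EdgeConn (insert (u, v) (ER ∪ EB)) a v := fun a ha =>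
          edgeConn_mono hsub2 (hEB.2.2 a ha v hvB)
        have huvU : EdgeConn (insert (u, v) (ER ∪ EB)) u v :=
          .single (Or.inl (Finset.mem_insert_self _ _))
        have hx' : x ∈ R ∪ B := hRBS.symm ▸ hx
        have hy' : y ∈ R ∪ B := hRBS.symm ▸ hy
        rcases Finset.mem_union.mp hx' with hxR | hxB <;>
          rcases Finset.mem_union.mp hy' with hyR | hyB
        · exact (connR x hxR).trans (edgeConn_symm (connR y hyR))
        · exact (connR x hxR).trans (huvU.trans (edgeConn_symm (connB y hyB)))
        · exact (connB x hxB).trans ((edgeConn_symm huvU).trans (edgeConn_symm (connR y hyR)))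
        · exact (connB x hxB).trans (edgeConn_symm (connB y hyB))
    have hle : mstCost S ≤ ∑ e ∈ insert (u, v) (ER ∪ EB), dist e.1 e.2 :=
      csInf_le (mstCost_bddBelow S) ⟨_, hU, rfl⟩
    rw [Finset.sum_insert hnm, Finset.sum_union hdE] at hle
    have : (dist u v : ℝ) ≤ dist h.1 h.2 := hduv
    linarith
  have h1 : ∀ cB ∈ setB, mstCost S - dist h.1 h.2 - cB ≤ mstCost R := by
    intro cB hcB
    rw [hmRR]
    refine le_csInf neR fun cR hcR => ?_
    linarith [key cR hcR cB hcB]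
  have h2 : mstCost S - dist h.1 h.2 - mstCost R ≤ mstCost B := by
    rw [hmBB]
    refine le_csInf neB fun cB hcB => ?_
    linarith [h1 cB hcB]
  linarith

/-- `S` consists of `n` pairs `{pts (i, false), pts (i, true)}`. Let `T` be
a minimum spanning tree of `S`, `h` a maximum-weight edge of `T`, and `T₁, T₂` the vertex
sets of the two components of `T` after removing `h`. If both points of some pair lie in
`T₁` and both points of some pair lie in `T₂`, then
`mstCost S ≤ (3/2) · min over feasible colorings of (mstCost R + mstCost B)`. -/
theorem mst_total_bounded_by_opt
    (n : ℕ) (hn : 1 ≤ n)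
    (pts : Fin n × Bool → α) (hinj : Function.Injective pts)
    (S : Finset α) (hS : S = Finset.image pts Finset.univ)
    (T : Finset (α × α)) (hT : IsSpanningTreeOn S T)
    (hTmin : (∑ e ∈ T, dist e.1 e.2) = mstCost S)
    (h : α × α) (hh : h ∈ T) (hmax : ∀ e ∈ T, dist e.1 e.2 ≤ dist h.1 h.2)
    (T₁ T₂ : Finset α) (hpart : T₁ ∪ T₂ = S) (hdisj : Disjoint T₁ T₂)
    (hne1 : T₁.Nonempty) (hne2 : T₂.Nonempty)
    (hcomp : ∀ x ∈ S, ∀ y ∈ S,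
      EdgeConn (T.erase h) x y ↔ ((x ∈ T₁ ∧ y ∈ T₁) ∨ (x ∈ T₂ ∧ y ∈ T₂)))
    (hpairT₁ : ∃ i : Fin n, pts (i, false) ∈ T₁ ∧ pts (i, true) ∈ T₁)
    (hpairT₂ : ∃ i : Fin n, pts (i, false) ∈ T₂ ∧ pts (i, true) ∈ T₂) :
    mstCost S ≤ (3 / 2) *
      ⨅ σ : Fin n → Bool,
        (mstCost (Finset.image (fun i => pts (i, σ i)) Finset.univ) +
         mstCost (Finset.image (fun i => pts (i, !(σ i))) Finset.univ)) := by
  set f : (Fin n → Bool) → ℝ := fun σ =>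
    mstCost (Finset.image (fun i => pts (i, σ i)) Finset.univ) +
      mstCost (Finset.image (fun i => pts (i, !(σ i))) Finset.univ) with hf
  obtain ⟨σ₀, hσ₀⟩ := Finite.exists_min f
  have hinf : f σ₀ ≤ ⨅ σ, f σ := le_ciInf hσ₀
  have hper : mstCost S ≤ (3 / 2) * f σ₀ :=
    per_sigma n hn pts hinj S hS T hT hTmin h hh hmax T₁ T₂ hpart hdisj hcomp
      hpairT₁ hpairT₂ σ₀
  calc mstCost S ≤ (3 / 2) * f σ₀ := hper
    _ ≤ (3 / 2) * ⨅ σ, f σ := by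
        apply mul_le_mul_of_nonneg_left hinf
        norm_num
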